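/- For every odd integer n ≥ 5, the independence number of the complement C̄_n of the n-cycle equals 2, and the quantum bound (1 + cos(π/n))/cos(π/n) of the anti-hole inequality strictly exceeds 2; i.e. the canonical anti-hole non-contextuality inequality ∑_{i=1}^n p_i ≤ 2 is violated by quantum theory. -/
import Mathlib


/-- Adjacency in the complement `C̄_n` of the `n`-cycle on the vertices `1, …, n`:
`i` and `j` are adjacent iff `i ≠ j` and `i - j ≢ ±1 (mod n)`.  Here `i % n + 1` is the
cyclic successor of a vertex `i ∈ {1, …, n}`. -/
def antiCycleAdj (n i j : ℕ) : Prop :=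
  i ≠ j ∧ ¬(i % n + 1 = j ∨ j % n + 1 = i)

lemma key (n a b c : ℕ) (hn : 5 ≤ n)
    (ha1 : 1 ≤ a) (ha2 : a ≤ n) (hb1 : 1 ≤ b) (hb2 : b ≤ n) (hc1 : 1 ≤ c) (hc2 : c ≤ n)
    (hab : a % n + 1 = b ∨ b % n + 1 = a)
    (hac : a % n + 1 = c ∨ c % n + 1 = a)
    (hbc : b % n + 1 = c ∨ c % n + 1 = b)
    (nab : a ≠ b) (nac : a ≠ c) (nbc : b ≠ c) : False := by
  have ea : a % n = a ∨ (a = n ∧ a % n = 0) := by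
    rcases lt_or_eq_of_le ha2 with h | h
    · exact Or.inl (Nat.mod_eq_of_lt h)
    · exact Or.inr ⟨h, by simp [h]⟩
  have eb : b % n = b ∨ (b = n ∧ b % n = 0) := by
    rcases lt_or_eq_of_le hb2 with h | h
    · exact Or.inl (Nat.mod_eq_of_lt h)
    · exact Or.inr ⟨h, by simp [h]⟩
  have ec : c % n = c ∨ (c = n ∧ c % n = 0) := by
    rcases lt_or_eq_of_le hc2 with h | h
    · exact Or.inl (Nat.mod_eq_of_lt h)
    · exact Or.inr ⟨h, by simp [h]⟩
  rcases ea with ea | ⟨ea1, ea2⟩ <;> rcases eb with eb | ⟨eb1, eb2⟩ <;>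
    rcases ec with ec | ⟨ec1, ec2⟩ <;> omega

/-- For every odd `n ≥ 5`, the independence number of `C̄_n` (the largest cardinality of a set
of pairwise nonadjacent vertices, i.e. the non-contextual hidden-variable bound of the
canonical anti-hole non-contextuality inequality `∑_{i=1}^n p_i ≤ 2`) equals `2`, and the
quantum bound `(1 + cos(π/n))/cos(π/n)` (the Lovász theta number of `C̄_n`) strictly exceeds
`2`: quantum theory violates the anti-hole inequality. -/
theorem antiCycle_independence_and_quantum_violation (n : ℕ) (hodd : Odd n) (hn : 5 ≤ n) :
    IsGreatest
      {k : ℕ | ∃ S : Finset ℕ,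
        (∀ i ∈ S, 1 ≤ i ∧ i ≤ n) ∧
        (∀ i ∈ S, ∀ j ∈ S, i ≠ j → ¬antiCycleAdj n i j) ∧
        S.card = k} 2 ∧
    (2 : ℝ) < (1 + Real.cos (Real.pi / n)) / Real.cos (Real.pi / n) := by
  constructor
  · constructor
    · refine ⟨{1, 2}, ?_, ?_, ?_⟩
      · intro i hi
        simp only [Finset.mem_insert, Finset.mem_singleton] at hi
        rcases hi with rfl | rfl <;> omega
      · intro i hi j hj hij
        simp only [Finset.mem_insert, Finset.mem_singleton] at hi hj
        have h1 : (1:ℕ) % n = 1 := Nat.mod_eq_of_lt (by omega)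
        rcases hi with rfl | rfl <;> rcases hj with rfl | rfl <;>
          simp_all [antiCycleAdj]
      · simp
    · rintro k ⟨S, hbound, hindep, rfl⟩
      by_contra hk
      push_neg at hk
      have h3 : 2 < S.card := hk
      rw [Finset.two_lt_card_iff] at h3
      obtain ⟨a, b, c, ha, hb, hc, nab, nac, nbc⟩ := h3
      have gab := hindep a ha b hb nab
      have gac := hindep a ha c hc nac
      have gbc := hindep b hb c hc nbc
      simp only [antiCycleAdj, not_and, not_not] at gab gac gbc
      exact key n a b c hn (hbound a ha).1 (hbound a ha).2 (hbound b hb).1 (hbound b hb).2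
        (hbound c hc).1 (hbound c hc).2 (gab nab) (gac nac) (gbc nbc) nab nac nbc
  · have hπ := Real.pi_pos
    have hn0 : (0:ℝ) < n := by positivity
    have hx0 : 0 < Real.pi / n := by positivity
    have hx2 : Real.pi / n < Real.pi / 2 := by
      apply div_lt_div_of_pos_left hπ (by norm_num)
      exact_mod_cast by omega
    have hc0 : 0 < Real.cos (Real.pi / n) :=
      Real.cos_pos_of_mem_Ioo ⟨by linarith, hx2⟩
    have hc1 : Real.cos (Real.pi / n) < 1 := by
      have := Real.cos_lt_cos_of_nonneg_of_le_pi le_rfl (by linarith) hx0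
      simpa using this
    rw [lt_div_iff₀ hc0]
    linarith
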